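/- Let P and Q be orthogonal projections on a Hilbert space with P − Q compact and finite rank. Then Index(P,Q) := dim Ker(P − Q − 1) − dim Ker(Q − P − 1) equals tr(P − Q) = dim Ran P − dim Ran Q when both P and Q have finite rank. -/

import Mathlib

noncomputable section

open Module

local notation "⟪" x ", " y "⟫" => @inner ℂ _ _ x y

variable {H : Type*} [NormedAddCommGroup H] [InnerProductSpace ℂ H] [CompleteSpace H]

/-- If `f` and `g` are mutually adjoint maps between finite-dimensional inner product
spaces, their ranks agree. -/
lemma aux_rank_adjoint {E F : Type*} [NormedAddCommGroup E] [InnerProductSpace ℂ E]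
    [NormedAddCommGroup F] [InnerProductSpace ℂ F]
    [FiniteDimensional ℂ E] [FiniteDimensional ℂ F]
    (f : E →ₗ[ℂ] F) (g : F →ₗ[ℂ] E)
    (h : ∀ x y, ⟪f x, y⟫ = ⟪x, g y⟫) :
    finrank ℂ (LinearMap.range f) = finrank ℂ (LinearMap.range g) := by
  have hker : LinearMap.ker f = (LinearMap.range g)ᗮ := by
    ext x
    simp only [LinearMap.mem_ker, Submodule.mem_orthogonal]
    constructor
    · rintro hx u ⟨y, rfl⟩
      have : ⟪f x, y⟫ = 0 := by rw [hx, inner_zero_left]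
      rw [h] at this
      have := congrArg (starRingEnd ℂ) this
      rwa [inner_conj_symm, map_zero] at this
    · intro hx
      have : ⟪f x, f x⟫ = 0 := by
        rw [h]
        have := hx (g (f x)) ⟨f x, rfl⟩
        have := congrArg (starRingEnd ℂ) this
        rwa [inner_conj_symm, map_zero] at this
      exact inner_self_eq_zero.mp this
  have h1 := LinearMap.finrank_range_add_finrank_ker f
  have h2 := Submodule.finrank_add_finrank_orthogonal (LinearMap.range g)
  rw [hker] at h1
  omega

lemma aux_ker_eq (P Q : H →L[ℂ] H)
    (hPsa : IsSelfAdjoint P) (hP2 : IsIdempotentElem P)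
    (hQsa : IsSelfAdjoint Q) (hQ2 : IsIdempotentElem Q) :
    LinearMap.ker ((P - Q - 1 : H →L[ℂ] H) : H →ₗ[ℂ] H) = LinearMap.range (P : H →ₗ[ℂ] H) ⊓ LinearMap.ker (Q : H →ₗ[ℂ] H) := by
  have hPsym := hPsa.isSymmetric
  have hQsym := hQsa.isSymmetric
  ext x
  simp only [LinearMap.mem_ker, Submodule.mem_inf, ContinuousLinearMap.coe_coe,
    ContinuousLinearMap.sub_apply, ContinuousLinearMap.one_apply, LinearMap.mem_range]
  constructor
  · intro hx
    have hx' : P x = x + Q x := by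
      have : P x - Q x - x = 0 := hx
      linear_combination (norm := abel) this
    -- ⟪P x, x⟫ = ‖P x‖², ⟪Q x, x⟫ = ‖Q x‖²
    have hPn : ⟪P x, x⟫ = (RCLike.ofReal ‖P x‖ : ℂ) ^ 2 := by
      have : P (P x) = P x := by
        have := congrFun (congrArg (fun T : H →L[ℂ] H => (T : H → H)) hP2) x
        simpa using this
      calc ⟪P x, x⟫ = ⟪P (P x), x⟫ := by rw [this]
        _ = ⟪P x, P x⟫ := hPsym (P x) x
        _ = (RCLike.ofReal ‖P x‖ : ℂ) ^ 2 := inner_self_eq_norm_sq_to_K _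
    have hQn : ⟪Q x, x⟫ = (RCLike.ofReal ‖Q x‖ : ℂ) ^ 2 := by
      have : Q (Q x) = Q x := by
        have := congrFun (congrArg (fun T : H →L[ℂ] H => (T : H → H)) hQ2) x
        simpa using this
      calc ⟪Q x, x⟫ = ⟪Q (Q x), x⟫ := by rw [this]
        _ = ⟪Q x, Q x⟫ := hQsym (Q x) x
        _ = (RCLike.ofReal ‖Q x‖ : ℂ) ^ 2 := inner_self_eq_norm_sq_to_K _
    have hsum : (RCLike.ofReal ‖P x‖ : ℂ) ^ 2 = (RCLike.ofReal ‖x‖ : ℂ) ^ 2 + (RCLike.ofReal ‖Q x‖ : ℂ) ^ 2 := by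
      rw [← hPn, hx', inner_add_left, hQn, inner_self_eq_norm_sq_to_K]
    have hsumR : (‖P x‖ : ℝ) ^ 2 = ‖x‖ ^ 2 + ‖Q x‖ ^ 2 := by
      exact_mod_cast hsum
    -- ‖P x‖² ≤ ‖P x‖ * ‖x‖ by Cauchy–Schwarz
    have hcs : ‖P x‖ ^ 2 ≤ ‖P x‖ * ‖x‖ := by
      have h1 : ‖⟪P x, x⟫‖ ≤ ‖P x‖ * ‖x‖ := norm_inner_le_norm _ _
      have h2 : (‖P x‖ : ℝ) ^ 2 ≤ ‖⟪P x, x⟫‖ := by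
        rw [hPn, norm_pow, RCLike.norm_ofReal, abs_of_nonneg (norm_nonneg _)]
      linarith
    have hQ0 : ‖Q x‖ = 0 := by
      nlinarith [norm_nonneg (P x), norm_nonneg x, norm_nonneg (Q x),
        sq_nonneg (‖P x‖ - ‖x‖)]
    have hQx : Q x = 0 := norm_eq_zero.mp hQ0
    have hPx : P x = x := by rw [hx', hQx, add_zero]
    exact ⟨⟨x, hPx⟩, hQx⟩
  · rintro ⟨⟨y, rfl⟩, hQ⟩
    have hP : P (P y) = P y := by
      have := congrFun (congrArg (fun T : H →L[ℂ] H => (T : H → H)) hP2) y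
      simpa using this
    rw [hP, hQ]
    abel

/-- For orthogonal projections `P`, `Q` of finite rank (so that `P − Q` is compact),
`Index(P,Q) = dim Ker(P − Q − 1) − dim Ker(Q − P − 1)` equals
`tr(P − Q) = dim Ran P − dim Ran Q`. -/
theorem index_of_finite_rank_projections
    (P Q : H →L[ℂ] H)
    (hPsa : IsSelfAdjoint P) (hP2 : IsIdempotentElem P)
    (hQsa : IsSelfAdjoint Q) (hQ2 : IsIdempotentElem Q)
    (hPfin : FiniteDimensional ℂ (LinearMap.range (P : H →ₗ[ℂ] H)))
    (hQfin : FiniteDimensional ℂ (LinearMap.range (Q : H →ₗ[ℂ] H))) :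
    (Module.finrank ℂ (LinearMap.ker ((P - Q - 1 : H →L[ℂ] H) : H →ₗ[ℂ] H)) : ℤ)
        - (Module.finrank ℂ (LinearMap.ker ((Q - P - 1 : H →L[ℂ] H) : H →ₗ[ℂ] H)) : ℤ)
      = (Module.finrank ℂ (LinearMap.range (P : H →ₗ[ℂ] H)) : ℤ)
        - (Module.finrank ℂ (LinearMap.range (Q : H →ₗ[ℂ] H)) : ℤ) := by
  rw [aux_ker_eq P Q hPsa hP2 hQsa hQ2, aux_ker_eq Q P hQsa hQ2 hPsa hP2]
  set Pr := LinearMap.range (P : H →ₗ[ℂ] H) with hPr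
  set Qr := LinearMap.range (Q : H →ₗ[ℂ] H) with hQr
  have hPfix : ∀ x : H, x ∈ Pr → P x = x := by
    rintro _ ⟨y, rfl⟩
    have := congrFun (congrArg (fun T : H →L[ℂ] H => (T : H → H)) hP2) y
    simpa using this
  have hQfix : ∀ x : H, x ∈ Qr → Q x = x := by
    rintro _ ⟨y, rfl⟩
    have := congrFun (congrArg (fun T : H →L[ℂ] H => (T : H → H)) hQ2) y
    simpa using this
  -- the two restricted maps
  let f : Pr →ₗ[ℂ] Qr := LinearMap.codRestrict Qr
    ((Q : H →ₗ[ℂ] H).comp Pr.subtype) (fun x => LinearMap.mem_range_self _ _)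
  let g : Qr →ₗ[ℂ] Pr := LinearMap.codRestrict Pr
    ((P : H →ₗ[ℂ] H).comp Qr.subtype) (fun x => LinearMap.mem_range_self _ _)
  have hPsym : ∀ x y : H, ⟪P x, y⟫ = ⟪x, P y⟫ := fun x y => hPsa.isSymmetric x y
  have hQsym : ∀ x y : H, ⟪Q x, y⟫ = ⟪x, Q y⟫ := fun x y => hQsa.isSymmetric x y
  have hadj : ∀ (x : Pr) (y : Qr), ⟪f x, y⟫ = ⟪x, g y⟫ := by
    rintro ⟨x, hx⟩ ⟨y, hy⟩
    show ⟪Q x, y⟫ = ⟪x, P y⟫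
    rw [hQsym x y, hQfix y hy, ← hPfix x hx, hPsym x y, hPfix x hx]
  have hrank := aux_rank_adjoint f g hadj
  -- ker f maps onto Pr ⊓ ker Q
  have hkf : Submodule.map Pr.subtype (LinearMap.ker f) = Pr ⊓ LinearMap.ker (Q : H →ₗ[ℂ] H) := by
    ext x
    simp only [Submodule.mem_map, LinearMap.mem_ker, Submodule.mem_inf]
    constructor
    · rintro ⟨⟨x, hx⟩, hfx, rfl⟩
      refine ⟨hx, ?_⟩
      have : Q x = 0 := congrArg Subtype.val hfx
      exact this
    · rintro ⟨hx, hQx⟩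
      exact ⟨⟨x, hx⟩, Subtype.ext hQx, rfl⟩
  have hkg : Submodule.map Qr.subtype (LinearMap.ker g) = Qr ⊓ LinearMap.ker (P : H →ₗ[ℂ] H) := by
    ext x
    simp only [Submodule.mem_map, LinearMap.mem_ker, Submodule.mem_inf]
    constructor
    · rintro ⟨⟨x, hx⟩, hgx, rfl⟩
      exact ⟨hx, congrArg Subtype.val hgx⟩
    · rintro ⟨hx, hPx⟩
      exact ⟨⟨x, hx⟩, Subtype.ext hPx, rfl⟩
  have hkf' : finrank ℂ (Pr ⊓ LinearMap.ker (Q : H →ₗ[ℂ] H) : Submodule ℂ H)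
      = finrank ℂ (LinearMap.ker f) := by
    rw [← hkf]; exact Submodule.finrank_map_subtype_eq _ _
  have hkg' : finrank ℂ (Qr ⊓ LinearMap.ker (P : H →ₗ[ℂ] H) : Submodule ℂ H)
      = finrank ℂ (LinearMap.ker g) := by
    rw [← hkg]; exact Submodule.finrank_map_subtype_eq _ _
  have rnf := LinearMap.finrank_range_add_finrank_ker f
  have rng := LinearMap.finrank_range_add_finrank_ker g
  have hfinP : finrank ℂ Pr = finrank ℂ (LinearMap.range f) + finrank ℂ (LinearMap.ker f) :=
    rnf.symm
  have hfinQ : finrank ℂ Qr = finrank ℂ (LinearMap.range g) + finrank ℂ (LinearMap.ker g) :=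
    rng.symm
  rw [hkf', hkg', hfinP, hfinQ, hrank]
  push_cast
  ring

end
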